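/- arXiv:2402.07002 — 5 statements merged into one kernel-verified Lean document; each statement's English description precedes it below -/
import Mathlib

section
/- Fix m, n ∈ ℕ and a real τ > 0. Let σ : Fin (min m n) → ℝ satisfy σ_j ≥ 0 for all j, let S ∈ ℝ^{m×n} be the rectangular diagonal matrix with diagonal entries σ_j, let U ∈ ℝ^{m×m} and V ∈ ℝ^{n×n} be orthogonal matrices, and set Y = U ⬝ S ⬝ Vᵀ. Let D ∈ ℝ^{m×n} be the rectangular diagonal matrix with diagonal entries max(σ_j − 1/(2τ), 0), and set Ŷ = U ⬝ D ⬝ Vᵀ. Then Ŷ minimizes X ↦ τ‖X − Y‖_F² + ‖X‖_* over all X ∈ ℝ^{m×n}: for every X ∈ ℝ^{m×n}, τ‖Ŷ − Y‖_F² + ‖Ŷ‖_* ≤ τ‖X − Y‖_F² + ‖X‖_*. (Matrix singular-value-thresholding lemma; this is the per-Fourier-slice content of Theorem 3.1, Eq. (7), and Lemma B.1.) -/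
open Matrix

/-- The `m × n` rectangular diagonal matrix with diagonal entries `σ`. -/
noncomputable def rectDiag (m n : ℕ) (σ : Fin (min m n) → ℝ) : Matrix (Fin m) (Fin n) ℝ :=
  Matrix.of fun i j =>
    if h : (i : ℕ) = (j : ℕ) ∧ (i : ℕ) < min m n then σ ⟨(i : ℕ), h.2⟩ else 0

section
open scoped ComplexOrder
/-- The positive semidefinite square root of a positive semidefinite matrix
(restored with its Mathlib (Dec 2024) definition; removed from current Mathlib). -/
noncomputable def Matrix.PosSemidef.sqrt {n 𝕜 : Type*} [Fintype n] [RCLike 𝕜] [DecidableEq n]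
    {A : Matrix n n 𝕜} (hA : A.PosSemidef) : Matrix n n 𝕜 :=
  hA.1.eigenvectorUnitary.1 * diagonal ((↑) ∘ (√·) ∘ hA.1.eigenvalues) *
    (star hA.1.eigenvectorUnitary : Matrix n n 𝕜)
end

/-- The Frobenius norm of a real matrix. -/
noncomputable def frobNorm {m n : ℕ} (X : Matrix (Fin m) (Fin n) ℝ) : ℝ :=
  Real.sqrt (∑ i, ∑ j, (X i j) ^ 2)

/-- The nuclear norm of a real matrix: the trace of the positive semidefinite
square root of `Xᵀ ⬝ X`. -/
noncomputable def nuclearNorm {m n : ℕ} (X : Matrix (Fin m) (Fin n) ℝ) : ℝ :=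
  (Matrix.posSemidef_conjTranspose_mul_self X).sqrt.trace

section aux

variable {k : Type*} [Fintype k] [DecidableEq k]

open scoped MatrixOrder in
lemma psd_sqrt_eq_cfc {A : Matrix k k ℝ} (hA : A.PosSemidef) : hA.sqrt = CFC.sqrt A := by
  rw [CFC.sqrt_eq_real_sqrt A hA.nonneg, cfcₙ_eq_cfc, hA.1.cfc_eq, Matrix.IsHermitian.cfc,
    Unitary.conjStarAlgAut_apply]
  rfl

open scoped MatrixOrder in
lemma Matrix.PosSemidef.eq_sqrt_of_sq_eq {A B : Matrix k k ℝ} (hA : A.PosSemidef)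
    (hB : B.PosSemidef) (hAB : A ^ 2 = B) : A = hB.sqrt := by
  rw [psd_sqrt_eq_cfc]
  exact (CFC.sqrt_unique (by rw [← pow_two]; exact hAB) hA.nonneg).symm

open scoped MatrixOrder in
lemma Matrix.PosSemidef.posSemidef_sqrt {A : Matrix k k ℝ} (hA : A.PosSemidef) :
    hA.sqrt.PosSemidef := by
  rw [psd_sqrt_eq_cfc]
  exact (CFC.sqrt_nonneg A).posSemidef

open scoped MatrixOrder in
lemma Matrix.PosSemidef.sqrt_mul_self {A : Matrix k k ℝ} (hA : A.PosSemidef) :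
    hA.sqrt * hA.sqrt = A := by
  rw [psd_sqrt_eq_cfc]
  exact CFC.sqrt_mul_sqrt_self A hA.nonneg

/-- sqrt is determined by the matrix -/
lemma sqrt_congr {A B : Matrix k k ℝ} (h : A = B) (hA : A.PosSemidef) (hB : B.PosSemidef) :
    hA.sqrt = hB.sqrt := by subst h; rfl

/-- sqrt of an orthogonal conjugation -/
lemma sqrt_conj {A : Matrix k k ℝ} (hA : A.PosSemidef) (W : Matrix k k ℝ)
    (hW : Wᵀ * W = 1) (hW' : W * Wᵀ = 1) (h : (W * A * Wᵀ).PosSemidef) :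
    h.sqrt = W * hA.sqrt * Wᵀ := by
  refine ((Matrix.PosSemidef.eq_sqrt_of_sq_eq ?_ h ?_)).symm
  · have := hA.posSemidef_sqrt.mul_mul_conjTranspose_same W
    simpa [conjTranspose_eq_transpose_of_trivial] using this
  · have h2 : hA.sqrt * hA.sqrt = A := hA.sqrt_mul_self
    calc (W * hA.sqrt * Wᵀ) ^ 2 = W * (hA.sqrt * (Wᵀ * W) * hA.sqrt) * Wᵀ := by
          rw [pow_two]; noncomm_ring
      _ = W * A * Wᵀ := by rw [hW, Matrix.mul_one, h2]

/-- sqrt of a nonnegative diagonal matrix -/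
lemma sqrt_diagonal (d : k → ℝ) (hd : ∀ i, 0 ≤ d i) (h : (diagonal d).PosSemidef) :
    h.sqrt = diagonal (fun i => Real.sqrt (d i)) := by
  refine ((Matrix.PosSemidef.eq_sqrt_of_sq_eq ?_ h ?_)).symm
  · rw [Matrix.posSemidef_diagonal_iff]
    intro i; exact Real.sqrt_nonneg _
  · rw [pow_two, diagonal_mul_diagonal]
    exact congrArg diagonal (funext fun i => Real.mul_self_sqrt (hd i))

end aux


lemma psd_diag_nonneg {k : Type*} [Fintype k] [DecidableEq k] {M : Matrix k k ℝ}
    (h : M.PosSemidef) (j : k) : 0 ≤ M j j := by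
  simpa using h.2 (Finsupp.single j 1)

lemma trace_transpose_mul' {m n : ℕ} (A B : Matrix (Fin m) (Fin n) ℝ) :
    (Aᵀ * B).trace = ∑ i, ∑ j, A i j * B i j := by
  rw [Finset.sum_comm]
  simp [Matrix.trace, Matrix.mul_apply, Matrix.diag]

lemma rectDiag_transpose_mul (m n : ℕ) (a b : Fin (min m n) → ℝ) :
    (rectDiag m n a)ᵀ * rectDiag m n b =
      diagonal (fun j : Fin n =>
        if h : (j : ℕ) < min m n then a ⟨j, h⟩ * b ⟨j, h⟩ else 0) := by
  ext j l
  simp only [Matrix.mul_apply, Matrix.transpose_apply, rectDiag, Matrix.of_apply]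
  by_cases hjl : j = l
  · subst hjl
    rw [Matrix.diagonal_apply_eq]
    by_cases hj : (j : ℕ) < min m n
    · have hjm : (j : ℕ) < m := lt_of_lt_of_le hj (min_le_left m n)
      rw [Finset.sum_eq_single (⟨(j : ℕ), hjm⟩ : Fin m)]
      · rw [dif_pos ⟨rfl, hj⟩, dif_pos ⟨rfl, hj⟩, dif_pos hj]
      · intro i _ hi
        have hne : ¬ ((i : ℕ) = (j : ℕ) ∧ (i : ℕ) < min m n) := by
          intro hc
          exact hi (Fin.ext hc.1)
        rw [dif_neg hne, zero_mul]
      · intro hc; exact absurd (Finset.mem_univ _) hc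
    · rw [dif_neg hj, Finset.sum_eq_zero]
      intro i _
      have hne : ¬ ((i : ℕ) = (j : ℕ) ∧ (i : ℕ) < min m n) := by
        rintro ⟨h1, h2⟩; exact hj (h1 ▸ h2)
      rw [dif_neg hne, zero_mul]
  · rw [Matrix.diagonal_apply_ne _ hjl, Finset.sum_eq_zero]
    intro i _
    by_cases h1 : (i : ℕ) = (j : ℕ) ∧ (i : ℕ) < min m n
    · have hne : ¬ ((i : ℕ) = (l : ℕ) ∧ (i : ℕ) < min m n) := by
        rintro ⟨h2, _⟩
        exact hjl (Fin.ext (h1.1 ▸ h2))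
      rw [dif_neg hne, mul_zero]
    · rw [dif_neg h1, zero_mul]

lemma sum_dite_fin {n N : ℕ} (hNn : N ≤ n) (f : Fin N → ℝ) :
    (∑ j : Fin n, if h : (j : ℕ) < N then f ⟨j, h⟩ else 0) = ∑ k : Fin N, f k := by
  have h1 : (∑ j : Fin n, if h : (j : ℕ) < N then f ⟨j, h⟩ else 0)
      = ∑ j ∈ Finset.range n, (if h : j < N then f ⟨j, h⟩ else 0) :=
    Fin.sum_univ_eq_sum_range (fun j => if h : j < N then f ⟨j, h⟩ else 0) n
  have h2 : (∑ k : Fin N, f k)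
      = ∑ j ∈ Finset.range N, (if h : j < N then f ⟨j, h⟩ else 0) := by
    rw [← Fin.sum_univ_eq_sum_range (fun j => if h : j < N then f ⟨j, h⟩ else 0) N]
    exact Finset.sum_congr rfl fun j _ => by rw [dif_pos j.isLt]
  rw [h1, h2]
  symm
  apply Finset.sum_subset (Finset.range_subset_range.mpr hNn)
  intro j _ hj
  rw [dif_neg (by simpa using hj)]


lemma nuclearNorm_conj {m n : ℕ} (U : Matrix (Fin m) (Fin m) ℝ) (A : Matrix (Fin m) (Fin n) ℝ)
    (V : Matrix (Fin n) (Fin n) ℝ)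
    (hU : Uᵀ * U = 1) (hV : Vᵀ * V = 1) (hV' : V * Vᵀ = 1) :
    nuclearNorm (U * A * Vᵀ) = nuclearNorm A := by
  unfold nuclearNorm
  have hA : (Aᴴ * A).PosSemidef := Matrix.posSemidef_conjTranspose_mul_self A
  have hmat : (U * A * Vᵀ)ᴴ * (U * A * Vᵀ) = V * (Aᴴ * A) * Vᵀ := by
    simp only [conjTranspose_eq_transpose_of_trivial, Matrix.transpose_mul,
      Matrix.transpose_transpose]
    calc V * (Aᵀ * Uᵀ) * (U * A * Vᵀ) = V * (Aᵀ * (Uᵀ * U) * A) * Vᵀ := by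
          simp only [Matrix.mul_assoc]
      _ = V * (Aᵀ * A) * Vᵀ := by rw [hU, Matrix.mul_one]
  have hconj : (V * (Aᴴ * A) * Vᵀ).PosSemidef := hmat ▸ Matrix.posSemidef_conjTranspose_mul_self _
  rw [sqrt_congr hmat _ hconj, sqrt_conj hA V hV hV' hconj]
  rw [Matrix.trace_mul_cycle, hV, Matrix.one_mul]

lemma nuclearNorm_rectDiag (m n : ℕ) (a : Fin (min m n) → ℝ) (ha : ∀ j, 0 ≤ a j) :
    nuclearNorm (rectDiag m n a) = ∑ k, a k := by
  unfold nuclearNorm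
  have hmat : (rectDiag m n a)ᴴ * rectDiag m n a =
      diagonal (fun j : Fin n =>
        if h : (j : ℕ) < min m n then a ⟨j, h⟩ * a ⟨j, h⟩ else 0) := by
    rw [conjTranspose_eq_transpose_of_trivial]
    exact rectDiag_transpose_mul m n a a
  have hd : ∀ j : Fin n, 0 ≤ (if h : (j : ℕ) < min m n then a ⟨j, h⟩ * a ⟨j, h⟩ else 0) := by
    intro j
    split
    · exact mul_nonneg (ha _) (ha _)
    · exact le_refl 0
  have hdiag : (diagonal (fun j : Fin n =>
      if h : (j : ℕ) < min m n then a ⟨j, h⟩ * a ⟨j, h⟩ else 0)).PosSemidef :=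
    Matrix.PosSemidef.diagonal hd
  rw [sqrt_congr hmat _ hdiag, sqrt_diagonal _ hd hdiag, Matrix.trace_diagonal]
  have : ∀ j : Fin n, Real.sqrt (if h : (j : ℕ) < min m n then a ⟨j, h⟩ * a ⟨j, h⟩ else 0)
      = (if h : (j : ℕ) < min m n then a ⟨j, h⟩ else 0) := by
    intro j
    split
    · exact Real.sqrt_mul_self (ha _)
    · exact Real.sqrt_zero
  rw [Finset.sum_congr rfl fun j _ => this j]
  exact sum_dite_fin (min_le_right m n) a

lemma sum_mul_le_sqrt {ι : Type*} (s : Finset ι) (f g : ι → ℝ) :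
    ∑ i ∈ s, f i * g i ≤ Real.sqrt (∑ i ∈ s, f i ^ 2) * Real.sqrt (∑ i ∈ s, g i ^ 2) := by
  have h := Finset.sum_mul_sq_le_sq_mul_sq s f g
  calc ∑ i ∈ s, f i * g i ≤ |∑ i ∈ s, f i * g i| := le_abs_self _
    _ = Real.sqrt ((∑ i ∈ s, f i * g i) ^ 2) := (Real.sqrt_sq_eq_abs _).symm
    _ ≤ Real.sqrt ((∑ i ∈ s, f i ^ 2) * ∑ i ∈ s, g i ^ 2) := Real.sqrt_le_sqrt h
    _ = _ := Real.sqrt_mul (Finset.sum_nonneg fun i _ => sq_nonneg _) _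


lemma trace_le_nuclearNorm {m n : ℕ} (X G : Matrix (Fin m) (Fin n) ℝ)
    (hG : ((1 : Matrix (Fin n) (Fin n) ℝ) - Gᵀ * G).PosSemidef) :
    (Gᵀ * X).trace ≤ nuclearNorm X := by
  have hH : (Xᴴ * X).PosSemidef := Matrix.posSemidef_conjTranspose_mul_self X
  have hherm : (Xᴴ * X).IsHermitian := hH.1
  set W : Matrix (Fin n) (Fin n) ℝ :=
    (hherm.eigenvectorUnitary : Matrix (Fin n) (Fin n) ℝ) with hWdef
  have hW1 : Wᵀ * W = 1 := by
    have := Matrix.mem_unitaryGroup_iff'.mp hherm.eigenvectorUnitary.2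
    rw [Matrix.star_eq_conjTranspose, conjTranspose_eq_transpose_of_trivial
      (hherm.eigenvectorUnitary : Matrix (Fin n) (Fin n) ℝ)] at this
    exact this
  have hW2 : W * Wᵀ = 1 := by
    have := Matrix.mem_unitaryGroup_iff.mp hherm.eigenvectorUnitary.2
    rw [Matrix.star_eq_conjTranspose, conjTranspose_eq_transpose_of_trivial
      (hherm.eigenvectorUnitary : Matrix (Fin n) (Fin n) ℝ)] at this
    exact this
  set lam : Fin n → ℝ := hherm.eigenvalues with hlamdef
  have hlam : ∀ i, 0 ≤ lam i := fun i => hH.eigenvalues_nonneg i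
  have spectral' : Xᴴ * X = W * diagonal lam * Wᵀ := by
    have h := hherm.spectral_theorem
    have hco : diagonal (RCLike.ofReal ∘ hherm.eigenvalues) = diagonal lam :=
      congrArg diagonal (funext fun i => by simp [Function.comp]; rfl)
    rw [hco] at h
    rw [h]
    congr 1
  have spectral : Xᵀ * X = W * diagonal lam * Wᵀ := by
    rw [← conjTranspose_eq_transpose_of_trivial X]; exact spectral'
  have hdg : (diagonal lam).PosSemidef := Matrix.PosSemidef.diagonal hlam
  have hconj : (W * diagonal lam * Wᵀ).PosSemidef := spectral' ▸ hH
  have hnuc : nuclearNorm X = ∑ j, Real.sqrt (lam j) := by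
    unfold nuclearNorm
    rw [sqrt_congr spectral' hH hconj, sqrt_conj hdg W hW1 hW2 hconj,
      sqrt_diagonal lam hlam hdg, Matrix.trace_mul_cycle, hW1, Matrix.one_mul,
      Matrix.trace_diagonal]
  have hXW : ∀ j, ∑ i, (X * W) i j ^ 2 = lam j := by
    intro j
    have hmm : (X * W)ᵀ * (X * W) = diagonal lam := by
      rw [Matrix.transpose_mul]
      calc Wᵀ * Xᵀ * (X * W) = Wᵀ * (Xᵀ * X) * W := by simp only [Matrix.mul_assoc]
        _ = (Wᵀ * W) * diagonal lam * (Wᵀ * W) := by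
            rw [spectral]; simp only [Matrix.mul_assoc]
        _ = diagonal lam := by rw [hW1, Matrix.one_mul, Matrix.mul_one]
    have h2 : ((X * W)ᵀ * (X * W)) j j = ∑ i, (X * W) i j ^ 2 := by
      simp [Matrix.mul_apply, sq, mul_comm]
    rw [← h2, hmm, Matrix.diagonal_apply_eq]
  have hGW : ∀ j, ∑ i, (G * W) i j ^ 2 ≤ 1 := by
    intro j
    have hpsd : (Wᵀ * ((1 : Matrix (Fin n) (Fin n) ℝ) - Gᵀ * G) * W).PosSemidef := by
      have := hG.conjTranspose_mul_mul_same W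
      simpa [conjTranspose_eq_transpose_of_trivial] using this
    have hdiag := psd_diag_nonneg hpsd j
    have hexp : Wᵀ * ((1 : Matrix (Fin n) (Fin n) ℝ) - Gᵀ * G) * W
        = 1 - (G * W)ᵀ * (G * W) := by
      rw [Matrix.mul_sub, Matrix.sub_mul, Matrix.mul_one, hW1, Matrix.transpose_mul]
      congr 1
      simp only [Matrix.mul_assoc]
    rw [hexp] at hdiag
    have h2 : ((G * W)ᵀ * (G * W)) j j = ∑ i, (G * W) i j ^ 2 := by
      simp [Matrix.mul_apply, sq, mul_comm]
    have h3 : ((1 : Matrix (Fin n) (Fin n) ℝ) - (G * W)ᵀ * (G * W)) j j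
        = 1 - ((G * W)ᵀ * (G * W)) j j := by
      simp [Matrix.sub_apply, Matrix.one_apply]
    rw [h3, h2] at hdiag
    linarith
  have htr : (Gᵀ * X).trace = ∑ j, ∑ i, (G * W) i j * (X * W) i j := by
    have h1 : (Gᵀ * X).trace = ((G * W)ᵀ * (X * W)).trace := by
      rw [Matrix.transpose_mul]
      calc (Gᵀ * X).trace = (Gᵀ * X * (W * Wᵀ)).trace := by rw [hW2, Matrix.mul_one]
        _ = ((Wᵀ * Gᵀ) * (X * W)).trace := by
            rw [← Matrix.mul_assoc, Matrix.trace_mul_cycle]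
            simp only [Matrix.mul_assoc]
    rw [h1, trace_transpose_mul', Finset.sum_comm]
  rw [htr, hnuc]
  apply Finset.sum_le_sum
  intro j _
  calc ∑ i, (G * W) i j * (X * W) i j
      ≤ Real.sqrt (∑ i, (G * W) i j ^ 2) * Real.sqrt (∑ i, (X * W) i j ^ 2) :=
        sum_mul_le_sqrt _ _ _
    _ ≤ 1 * Real.sqrt (lam j) := by
        rw [hXW j]
        apply mul_le_mul_of_nonneg_right _ (Real.sqrt_nonneg _)
        exact Real.sqrt_le_one.mpr (hGW j)
    _ = Real.sqrt (lam j) := one_mul _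


lemma rectDiag_sub (m n : ℕ) (a b : Fin (min m n) → ℝ) :
    rectDiag m n a - rectDiag m n b = rectDiag m n (a - b) := by
  ext i j
  simp only [Matrix.sub_apply, rectDiag, Matrix.of_apply]
  split
  · simp
  · simp

lemma rectDiag_smul (m n : ℕ) (c : ℝ) (a : Fin (min m n) → ℝ) :
    c • rectDiag m n a = rectDiag m n (c • a) := by
  ext i j
  simp only [Matrix.smul_apply, rectDiag, Matrix.of_apply]
  split
  · simp
  · simp

/-- Singular value thresholding: `Ŷ = U D Vᵀ` (with singular values soft-thresholded
at level `1/(2τ)`) minimizes `X ↦ τ‖X − Y‖_F² + ‖X‖_*` where `Y = U S Vᵀ`. -/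
theorem svt_minimizer (m n : ℕ) (τ : ℝ) (hτ : 0 < τ)
    (σ : Fin (min m n) → ℝ) (hσ : ∀ j, 0 ≤ σ j)
    (U : Matrix (Fin m) (Fin m) ℝ) (V : Matrix (Fin n) (Fin n) ℝ)
    (hU : Uᵀ * U = 1) (hU' : U * Uᵀ = 1)
    (hV : Vᵀ * V = 1) (hV' : V * Vᵀ = 1)
    (Y : Matrix (Fin m) (Fin n) ℝ)
    (hY : Y = U * rectDiag m n σ * Vᵀ)
    (Yhat : Matrix (Fin m) (Fin n) ℝ)
    (hYhat : Yhat = U * rectDiag m n (fun j => max (σ j - 1 / (2 * τ)) 0) * Vᵀ) :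
    ∀ X : Matrix (Fin m) (Fin n) ℝ,
      τ * (frobNorm (Yhat - Y)) ^ 2 + nuclearNorm Yhat ≤
        τ * (frobNorm (X - Y)) ^ 2 + nuclearNorm X := by
  intro X
  set c : ℝ := 1 / (2 * τ) with hc
  have hc0 : 0 < c := by positivity
  have hcc : 2 * τ * c = 1 := by rw [hc]; field_simp
  set D : Fin (min m n) → ℝ := fun j => max (σ j - c) 0 with hD
  set E : Fin (min m n) → ℝ := fun j => 2 * τ * (σ j - D j) with hE
  have hD0 : ∀ j, 0 ≤ D j := fun j => le_max_right _ _
  have hED : ∀ j, E j * D j = D j := by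
    intro j
    show (2 * τ * (σ j - max (σ j - c) 0)) * max (σ j - c) 0 = max (σ j - c) 0
    rcases le_or_gt (σ j) c with h | h
    · rw [max_eq_right (by linarith)]
      ring
    · rw [max_eq_left (by linarith)]
      calc 2 * τ * (σ j - (σ j - c)) * (σ j - c) = (2 * τ * c) * (σ j - c) := by ring
        _ = σ j - c := by rw [hcc, one_mul]
  have hE0 : ∀ j, 0 ≤ E j := by
    intro j
    show 0 ≤ 2 * τ * (σ j - max (σ j - c) 0)
    rcases le_or_gt (σ j) c with h | h
    · rw [max_eq_right (by linarith)]
      have := hσ j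
      nlinarith
    · rw [max_eq_left (by linarith)]
      nlinarith
  have hE1 : ∀ j, E j ≤ 1 := by
    intro j
    show 2 * τ * (σ j - max (σ j - c) 0) ≤ 1
    rcases le_or_gt (σ j) c with h | h
    · rw [max_eq_right (by linarith)]
      nlinarith
    · rw [max_eq_left (by linarith)]
      nlinarith
  set G : Matrix (Fin m) (Fin n) ℝ := U * rectDiag m n E * Vᵀ with hG
  -- G = 2τ • (Y - Yhat)
  have hGsmul : G = (2 * τ) • (Y - Yhat) := by
    rw [hY, hYhat, hG, ← Matrix.sub_mul, ← Matrix.mul_sub, rectDiag_sub,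
      ← Matrix.smul_mul, ← Matrix.mul_smul, rectDiag_smul]
    have hEeq : E = (2 * τ) • (σ - D) := by
      funext j
      simp [hE]
    rw [hEeq]
  -- trace(Gᵀ (U * rectDiag a * Vᵀ)) = ∑ E * a
  have htrG : ∀ a : Fin (min m n) → ℝ,
      (Gᵀ * (U * rectDiag m n a * Vᵀ)).trace = ∑ k, E k * a k := by
    intro a
    have h1 : Gᵀ * (U * rectDiag m n a * Vᵀ)
        = V * ((rectDiag m n E)ᵀ * rectDiag m n a) * Vᵀ := by
      rw [hG, Matrix.transpose_mul, Matrix.transpose_mul, Matrix.transpose_transpose]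
      calc Vᵀᵀ * ((rectDiag m n E)ᵀ * Uᵀ) * (U * rectDiag m n a * Vᵀ)
          = V * ((rectDiag m n E)ᵀ * (Uᵀ * U) * rectDiag m n a) * Vᵀ := by
            rw [Matrix.transpose_transpose]; simp only [Matrix.mul_assoc]
        _ = V * ((rectDiag m n E)ᵀ * rectDiag m n a) * Vᵀ := by
            rw [hU, Matrix.mul_one]
    rw [h1, Matrix.trace_mul_cycle, hV, Matrix.one_mul, rectDiag_transpose_mul,
      Matrix.trace_diagonal]
    exact sum_dite_fin (min_le_right m n) (fun k => E k * a k)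
  -- 1 - GᵀG is psd
  have hGtG : ((1 : Matrix (Fin n) (Fin n) ℝ) - Gᵀ * G).PosSemidef := by
    have h1 : Gᵀ * G = V * ((rectDiag m n E)ᵀ * rectDiag m n E) * Vᵀ := by
      rw [hG, Matrix.transpose_mul, Matrix.transpose_mul, Matrix.transpose_transpose]
      calc Vᵀᵀ * ((rectDiag m n E)ᵀ * Uᵀ) * (U * rectDiag m n E * Vᵀ)
          = V * ((rectDiag m n E)ᵀ * (Uᵀ * U) * rectDiag m n E) * Vᵀ := by
            rw [Matrix.transpose_transpose]; simp only [Matrix.mul_assoc]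
        _ = V * ((rectDiag m n E)ᵀ * rectDiag m n E) * Vᵀ := by
            rw [hU, Matrix.mul_one]
    set df : Fin n → ℝ :=
      fun j => if h : (j : ℕ) < min m n then E ⟨j, h⟩ * E ⟨j, h⟩ else 0 with hdf
    have h2 : (rectDiag m n E)ᵀ * rectDiag m n E = diagonal df :=
      rectDiag_transpose_mul m n E E
    rw [h1, h2]
    have hone : (1 : Matrix (Fin n) (Fin n) ℝ) = V * 1 * Vᵀ := by
      rw [Matrix.mul_one, hV']
    rw [hone, ← Matrix.sub_mul, ← Matrix.mul_sub]
    have hd : ∀ j, 0 ≤ (1 : ℝ) - df j := by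
      intro j
      rw [hdf]
      show 0 ≤ 1 - (if h : (j : ℕ) < min m n then E ⟨(j : ℕ), h⟩ * E ⟨(j : ℕ), h⟩ else 0)
      by_cases h : (j : ℕ) < min m n
      · rw [dif_pos h]
        nlinarith [hE0 ⟨(j : ℕ), h⟩, hE1 ⟨(j : ℕ), h⟩]
      · rw [dif_neg h]
        norm_num
    have heq : (1 : Matrix (Fin n) (Fin n) ℝ) - diagonal df
        = diagonal (fun j => 1 - df j) := by
      rw [← Matrix.diagonal_one, Matrix.diagonal_sub]
    rw [heq]
    have hpsd : (diagonal (fun j => 1 - df j)).PosSemidef :=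
      Matrix.PosSemidef.diagonal hd
    have := hpsd.mul_mul_conjTranspose_same V
    simpa [conjTranspose_eq_transpose_of_trivial] using this
  -- key trace values
  have htrYhat : (Gᵀ * Yhat).trace = ∑ k, D k := by
    rw [hYhat, htrG]
    exact Finset.sum_congr rfl fun k _ => hED k
  have hnucYhat : nuclearNorm Yhat = ∑ k, D k := by
    rw [hYhat, nuclearNorm_conj U _ V hU hV hV', nuclearNorm_rectDiag m n D hD0]
  have hdual : (Gᵀ * X).trace ≤ nuclearNorm X := trace_le_nuclearNorm X G hGtG
  -- Frobenius expansion
  have hfs : ∀ A : Matrix (Fin m) (Fin n) ℝ, frobNorm A ^ 2 = ∑ i, ∑ j, A i j ^ 2 := by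
    intro A
    rw [frobNorm, Real.sq_sqrt]
    exact Finset.sum_nonneg fun i _ => Finset.sum_nonneg fun j _ => sq_nonneg _
  have key : ∀ i j, (X - Y) i j ^ 2 = (X - Yhat) i j ^ 2
      + 2 * ((X - Yhat) i j * (Yhat - Y) i j) + (Yhat - Y) i j ^ 2 := by
    intro i j
    simp only [Matrix.sub_apply]
    ring
  have h1 : ∑ i, ∑ j, (X - Y) i j ^ 2
      = (∑ i, ∑ j, (X - Yhat) i j ^ 2)
        + 2 * (∑ i, ∑ j, (X - Yhat) i j * (Yhat - Y) i j)
        + (∑ i, ∑ j, (Yhat - Y) i j ^ 2) := by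
    simp_rw [key, Finset.sum_add_distrib, Finset.mul_sum]
  have h2 : (Gᵀ * (X - Yhat)).trace
      = -(2 * τ) * ∑ i, ∑ j, (X - Yhat) i j * (Yhat - Y) i j := by
    rw [trace_transpose_mul' G (X - Yhat), hGsmul]
    simp_rw [Finset.mul_sum]
    refine Finset.sum_congr rfl fun i _ => Finset.sum_congr rfl fun j _ => ?_
    simp only [Matrix.smul_apply, Matrix.sub_apply, smul_eq_mul]
    ring
  have h3 : (Gᵀ * (X - Yhat)).trace = (Gᵀ * X).trace - (Gᵀ * Yhat).trace := by
    rw [Matrix.mul_sub, Matrix.trace_sub]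
  have hb2 : 2 * τ * (∑ i, ∑ j, (X - Yhat) i j * (Yhat - Y) i j)
      = (Gᵀ * Yhat).trace - (Gᵀ * X).trace := by
    have := h2.symm.trans h3
    linarith
  have hτa : 0 ≤ τ * ∑ i, ∑ j, (X - Yhat) i j ^ 2 :=
    mul_nonneg hτ.le
      (Finset.sum_nonneg fun i _ => Finset.sum_nonneg fun j _ => sq_nonneg _)
  rw [hfs, hfs]
  have hmul : τ * (∑ i, ∑ j, (X - Y) i j ^ 2)
      = τ * (∑ i, ∑ j, (X - Yhat) i j ^ 2)
        + 2 * τ * (∑ i, ∑ j, (X - Yhat) i j * (Yhat - Y) i j)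
        + τ * (∑ i, ∑ j, (Yhat - Y) i j ^ 2) := by
    rw [h1]; ring
  linarith [hmul, hb2, hdual, htrYhat, hnucYhat, hτa]
end

section
/- Let E = EuclideanSpace ℝ (Fin d), let μ > 0, γ ≥ 0, B ≥ 0, and N ≥ 1. For each k ∈ Fin N let f_k : E → ℝ be differentiable with ⟪∇f_k(v) − ∇f_k(w), v − w⟫ ≥ μ‖v − w‖² for all v, w, admitting a point w_k* with ∇f_k(w_k*) = 0, and let w_k ∈ E satisfy ‖∇f_k(w_k)‖ ≤ γ‖∇f_k(w₀)‖ for a fixed w₀ ∈ E. Set f = (1/N)·Σ_k f_k and assume the B-dissimilarity bound (1/N)·Σ_k ‖∇f_k(w₀)‖² ≤ B²·‖∇f(w₀)‖². Then ‖(1/N)·Σ_k w_k − w₀‖ ≤ ((1 + γ)·B/μ) · ‖∇f(w₀)‖. (This is Eq. (25) in the proof of Theorem 4.3.) -/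
open scoped RealInnerProductSpace

/-- Distance bound for the average of inexact local minimizers,
Eq. (25) in the proof of Theorem 4.3. -/
theorem avg_inexact_distance {d N : ℕ} (hN : 1 ≤ N)
    (μ γ B : ℝ) (hμ : 0 < μ) (hγ : 0 ≤ γ) (hB : 0 ≤ B)
    (fk : Fin N → EuclideanSpace ℝ (Fin d) → ℝ)
    (hdiff : ∀ k, Differentiable ℝ (fk k))
    (hconv : ∀ k, ∀ v w : EuclideanSpace ℝ (Fin d),
      μ * ‖v - w‖ ^ 2 ≤ ⟪gradient (fk k) v - gradient (fk k) w, v - w⟫)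
    (hcrit : ∀ k, ∃ wstar : EuclideanSpace ℝ (Fin d), gradient (fk k) wstar = 0)
    (w₀ : EuclideanSpace ℝ (Fin d)) (w : Fin N → EuclideanSpace ℝ (Fin d))
    (hinexact : ∀ k, ‖gradient (fk k) (w k)‖ ≤ γ * ‖gradient (fk k) w₀‖)
    (f : EuclideanSpace ℝ (Fin d) → ℝ)
    (hf : f = fun x => (N : ℝ)⁻¹ * ∑ k, fk k x)
    (hdissim : (N : ℝ)⁻¹ * ∑ k, ‖gradient (fk k) w₀‖ ^ 2 ≤
      B ^ 2 * ‖gradient f w₀‖ ^ 2) :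
    ‖(N : ℝ)⁻¹ • ∑ k, w k - w₀‖ ≤ ((1 + γ) * B / μ) * ‖gradient f w₀‖ := by
  have hNpos : (0 : ℝ) < N := by exact_mod_cast hN
  set a : Fin N → ℝ := fun k => ‖gradient (fk k) w₀‖ with ha
  -- step 1: μ ‖w k - w₀‖ ≤ (1+γ) * a k
  have step1 : ∀ k, ‖w k - w₀‖ ≤ (1 + γ) / μ * a k := by
    intro k
    have hcs := hconv k (w k) w₀
    have hμn : μ * ‖w k - w₀‖ ≤ ‖gradient (fk k) (w k) - gradient (fk k) w₀‖ := by
      rcases eq_or_ne (w k - w₀) 0 with h0 | h0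
      · simp [h0]
      · have hcs2 : ⟪gradient (fk k) (w k) - gradient (fk k) w₀, w k - w₀⟫ ≤
            ‖gradient (fk k) (w k) - gradient (fk k) w₀‖ * ‖w k - w₀‖ :=
          real_inner_le_norm _ _
        have hnpos : 0 < ‖w k - w₀‖ := norm_pos_iff.mpr h0
        have := hcs.trans hcs2
        rw [sq] at this
        nlinarith
    have hbnd : ‖gradient (fk k) (w k) - gradient (fk k) w₀‖ ≤ (1 + γ) * a k := by
      calc ‖gradient (fk k) (w k) - gradient (fk k) w₀‖
          ≤ ‖gradient (fk k) (w k)‖ + ‖gradient (fk k) w₀‖ := norm_sub_le _ _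
        _ ≤ γ * a k + a k := add_le_add (hinexact k) le_rfl
        _ = (1 + γ) * a k := by ring
    rw [div_mul_eq_mul_div, le_div_iff₀ hμ, mul_comm]
    exact le_trans hμn hbnd
  -- step 2: (1/N) ∑ a k ≤ B * ‖gradient f w₀‖
  have hanonneg : ∀ k ∈ Finset.univ, 0 ≤ a k := fun k _ => norm_nonneg _
  have step2 : (N : ℝ)⁻¹ * ∑ k, a k ≤ B * ‖gradient f w₀‖ := by
    have hsq : (∑ k, a k) ^ 2 ≤ N * ∑ k, a k ^ 2 := by
      simpa using sq_sum_le_card_mul_sum_sq (s := Finset.univ) (f := a)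
    have h2 : (N : ℝ)⁻¹ * (∑ k, a k) ^ 2 ≤ ∑ k, a k ^ 2 := by
      rw [inv_mul_le_iff₀ hNpos]; exact hsq
    have h1 : ((N : ℝ)⁻¹ * ∑ k, a k) ^ 2 ≤ (B * ‖gradient f w₀‖) ^ 2 := by
      calc ((N : ℝ)⁻¹ * ∑ k, a k) ^ 2
          = (N : ℝ)⁻¹ * ((N : ℝ)⁻¹ * (∑ k, a k) ^ 2) := by ring
        _ ≤ (N : ℝ)⁻¹ * ∑ k, a k ^ 2 :=
            mul_le_mul_of_nonneg_left h2 (by positivity)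
        _ ≤ B ^ 2 * ‖gradient f w₀‖ ^ 2 := hdissim
        _ = (B * ‖gradient f w₀‖) ^ 2 := by ring
    have hL : 0 ≤ (N : ℝ)⁻¹ * ∑ k, a k := Finset.sum_nonneg hanonneg |> mul_nonneg (by positivity)
    have hR : 0 ≤ B * ‖gradient f w₀‖ := by positivity
    exact (pow_le_pow_iff_left₀ hL hR two_ne_zero).mp h1
  -- combine
  have hrw : (N : ℝ)⁻¹ • ∑ k, w k - w₀ = (N : ℝ)⁻¹ • ∑ k, (w k - w₀) := by
    rw [Finset.sum_sub_distrib, smul_sub, Finset.sum_const, Finset.card_univ,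
      Fintype.card_fin, ← Nat.cast_smul_eq_nsmul ℝ, smul_smul,
      inv_mul_cancel₀ (ne_of_gt hNpos), one_smul]
  calc ‖(N : ℝ)⁻¹ • ∑ k, w k - w₀‖
      = ‖(N : ℝ)⁻¹ • ∑ k, (w k - w₀)‖ := by rw [hrw]
    _ ≤ (N : ℝ)⁻¹ * ∑ k, ‖w k - w₀‖ := by
        rw [norm_smul, Real.norm_eq_abs, abs_of_nonneg (inv_nonneg.mpr hNpos.le)]
        exact mul_le_mul_of_nonneg_left (norm_sum_le _ _) (by positivity)
    _ ≤ (N : ℝ)⁻¹ * ∑ k, (1 + γ) / μ * a k :=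
        mul_le_mul_of_nonneg_left (Finset.sum_le_sum fun k _ => step1 k) (by positivity)
    _ = (1 + γ) / μ * ((N : ℝ)⁻¹ * ∑ k, a k) := by
        rw [← Finset.mul_sum]; ring
    _ ≤ (1 + γ) / μ * (B * ‖gradient f w₀‖) :=
        mul_le_mul_of_nonneg_left step2 (by positivity)
    _ = ((1 + γ) * B / μ) * ‖gradient f w₀‖ := by ring
end

section
/- Let E = EuclideanSpace ℝ (Fin d) and for each k ∈ Fin N let f_k : E → ℝ be differentiable. Set f = (1/N)·Σ_k f_k and assume ∇f is L₂-Lipschitz: ‖∇f(v) − ∇f(w)‖ ≤ L₂‖v − w‖ for all v, w. Fix w₀ ∈ E and η > 0, let w_k = w₀ − η·∇f_k(w₀), let w̄ = (1/N)·Σ_k w_k, and assume ‖w̄ − w₀‖ ≤ ((1 + γ)·B/μ)·‖∇f(w₀)‖ for constants γ ≥ 0, B ≥ 0, μ > 0. Then f(w̄) ≤ f(w₀) − (η − L₂·B²·(1 + γ)²/(2μ²))·‖∇f(w₀)‖². (This is the one-step descent bound, Eq. (27), in the proof of Theorem 4.3.) -/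
open InnerProductSpace

variable {E : Type*} [NormedAddCommGroup E] [InnerProductSpace ℝ E] [CompleteSpace E]

lemma fderiv_apply_eq_inner_gradient (f : E → ℝ) (hf : Differentiable ℝ f) (x v : E) :
    fderiv ℝ f x v = ⟪gradient f x, v⟫_ℝ := by
  have h : (InnerProductSpace.toDual ℝ E) (gradient f x) = fderiv ℝ f x :=
    (InnerProductSpace.toDual ℝ E).apply_symm_apply _
  rw [← h]
  simp [InnerProductSpace.toDual_apply_apply]

lemma descent_lemma (f : E → ℝ) (hf : Differentiable ℝ f) (L : ℝ) (hL : 0 ≤ L)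
    (hLip : ∀ v w : E, ‖gradient f v - gradient f w‖ ≤ L * ‖v - w‖) (x y : E) :
    f y ≤ f x + ⟪gradient f x, y - x⟫_ℝ + L / 2 * ‖y - x‖ ^ 2 := by
  set v := y - x with hv
  set c : ℝ := ⟪gradient f x, v⟫_ℝ with hc
  set h : ℝ → ℝ := fun t => f (x + t • v) - t * c - L * ‖v‖ ^ 2 * t ^ 2 / 2 with hh
  have hder : ∀ t : ℝ, HasDerivAt h
      (⟪gradient f (x + t • v), v⟫_ℝ - c - L * ‖v‖ ^ 2 * t) t := by
    intro t
    have hγ : HasDerivAt (fun t : ℝ => x + t • v) v t := by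
      simpa using ((hasDerivAt_id t).smul_const v).const_add x
    have h1 : HasDerivAt (fun t : ℝ => f (x + t • v))
        (⟪gradient f (x + t • v), v⟫_ℝ) t := by
      have := (hf (x + t • v)).hasFDerivAt.comp_hasDerivAt t hγ
      rwa [fderiv_apply_eq_inner_gradient f hf] at this
    have h2 : HasDerivAt (fun t : ℝ => t * c) c t := by
      simpa using (hasDerivAt_id t).mul_const c
    have h3 : HasDerivAt (fun t : ℝ => L * ‖v‖ ^ 2 * t ^ 2 / 2)
        (L * ‖v‖ ^ 2 * t) t := by
      have := ((hasDerivAt_pow 2 t).const_mul (L * ‖v‖ ^ 2)).div_const 2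
      refine this.congr_deriv ?_
      ring
    exact (h1.sub h2).sub h3
  have hanti : AntitoneOn h (Set.Icc 0 1) := by
    apply antitoneOn_of_deriv_nonpos (convex_Icc 0 1)
    · exact fun t _ => (hder t).continuousAt.continuousWithinAt
    · intro t _
      exact (hder t).differentiableAt.differentiableWithinAt
    · intro t ht
      rw [interior_Icc] at ht
      rw [(hder t).deriv]
      have hb : ⟪gradient f (x + t • v) - gradient f x, v⟫_ℝ ≤ L * ‖v‖ ^ 2 * t := by
        calc ⟪gradient f (x + t • v) - gradient f x, v⟫_ℝ
            ≤ ‖gradient f (x + t • v) - gradient f x‖ * ‖v‖ := real_inner_le_norm _ _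
          _ ≤ (L * ‖x + t • v - x‖) * ‖v‖ := by
              gcongr; exact hLip _ _
          _ = L * ‖v‖ ^ 2 * t := by
              simp [norm_smul, abs_of_pos ht.1]; ring
      rw [inner_sub_left] at hb
      linarith
  have key := hanti (Set.mem_Icc.2 ⟨le_refl 0, zero_le_one⟩)
    (Set.mem_Icc.2 ⟨zero_le_one, le_refl 1⟩) zero_le_one
  have hy : x + (1 : ℝ) • v = y := by rw [hv]; simp
  have h0 : h 0 = f x := by simp [hh]
  have h1 : h 1 = f y - c - L * ‖v‖ ^ 2 / 2 := by
    simp only [hh, hy, one_pow, mul_one, one_mul]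
  rw [h0, h1] at key
  linarith


/-- One-step descent bound, Eq. (27) in the proof of Theorem 4.3: after each client
performs one gradient step from `w₀`, the average iterate `w̄` satisfies
`f(w̄) ≤ f(w₀) − (η − L₂B²(1+γ)²/(2μ²))‖∇f(w₀)‖²`. -/
theorem one_step_descent {d N : ℕ} (hN : 1 ≤ N)
    (μ γ B L₂ η : ℝ) (hμ : 0 < μ) (hγ : 0 ≤ γ) (hB : 0 ≤ B) (hη : 0 < η)
    (fk : Fin N → EuclideanSpace ℝ (Fin d) → ℝ)
    (hdiff : ∀ k, Differentiable ℝ (fk k))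
    (f : EuclideanSpace ℝ (Fin d) → ℝ)
    (hf : f = fun x => (N : ℝ)⁻¹ * ∑ k, fk k x)
    (hLip : ∀ v w : EuclideanSpace ℝ (Fin d),
      ‖gradient f v - gradient f w‖ ≤ L₂ * ‖v - w‖)
    (w₀ : EuclideanSpace ℝ (Fin d)) (wk : Fin N → EuclideanSpace ℝ (Fin d))
    (hwk : ∀ k, wk k = w₀ - η • gradient (fk k) w₀)
    (wbar : EuclideanSpace ℝ (Fin d))
    (hwbar : wbar = (N : ℝ)⁻¹ • ∑ k, wk k)
    (hdist : ‖wbar - w₀‖ ≤ ((1 + γ) * B / μ) * ‖gradient f w₀‖) :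
    f wbar ≤ f w₀ - (η - L₂ * B ^ 2 * (1 + γ) ^ 2 / (2 * μ ^ 2)) * ‖gradient f w₀‖ ^ 2 := by
  have hNpos : (0 : ℝ) < N := by exact_mod_cast Nat.lt_of_lt_of_le Nat.zero_lt_one hN
  have hfd : Differentiable ℝ f := by
    rw [hf]; exact Differentiable.const_mul (Differentiable.fun_sum fun k _ => hdiff k) _
  -- gradient of the average
  have hgrad : gradient f w₀ = (N : ℝ)⁻¹ • ∑ k, gradient (fk k) w₀ := by
    have hsum : HasFDerivAt (fun x => ∑ k, fk k x)
        (∑ k, InnerProductSpace.toDual ℝ _ (gradient (fk k) w₀)) w₀ := by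
      apply HasFDerivAt.fun_sum
      intro k _
      exact ((hdiff k) w₀).hasGradientAt
    have hmul : HasFDerivAt f
        ((N : ℝ)⁻¹ • ∑ k, InnerProductSpace.toDual ℝ _ (gradient (fk k) w₀)) w₀ := by
      rw [hf]; exact hsum.const_smul ((N : ℝ)⁻¹)
    have heq : InnerProductSpace.toDual ℝ (EuclideanSpace ℝ (Fin d))
        ((N : ℝ)⁻¹ • ∑ k, gradient (fk k) w₀)
        = (N : ℝ)⁻¹ • ∑ k, InnerProductSpace.toDual ℝ _ (gradient (fk k) w₀) := by
      simp [map_smul, map_sum]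
    have : HasGradientAt f ((N : ℝ)⁻¹ • ∑ k, gradient (fk k) w₀) w₀ := by
      rw [HasGradientAt, HasGradientAtFilter, heq]
      exact hmul
    exact this.gradient
  -- wbar - w₀ = -η • gradient f w₀
  have hdiffpt : wbar - w₀ = -(η • gradient f w₀) := by
    rw [hwbar, hgrad]
    simp only [hwk]
    rw [Finset.sum_sub_distrib, smul_sub, Finset.sum_const, Finset.card_univ,
      Fintype.card_fin, ← Finset.smul_sum]
    rw [← Nat.cast_smul_eq_nsmul ℝ]
    rw [smul_smul, inv_mul_cancel₀ (ne_of_gt hNpos)]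
    rw [smul_smul, smul_smul, mul_comm ((N:ℝ)⁻¹) η, ← smul_smul]
    module
  set g := gradient f w₀ with hg
  by_cases hg0 : g = 0
  · have : wbar = w₀ := by
      have := hdiffpt; rw [hg0] at this; simp at this
      linear_combination (norm := module) this
    rw [this, hg0]
    simp
  · have hgn : 0 < ‖g‖ := norm_pos_iff.2 hg0
    have hL2 : 0 ≤ L₂ := by
      have h1 := hLip g 0
      have h2 : (0:ℝ) ≤ ‖gradient f g - gradient f 0‖ := norm_nonneg _
      rw [sub_zero] at h1
      nlinarith
    have key := descent_lemma f hfd L₂ hL2 hLip w₀ wbar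
    rw [hdiffpt] at key
    have hip : ⟪g, -(η • g)⟫_ℝ = -(η * ‖g‖ ^ 2) := by
      rw [inner_neg_right, real_inner_smul_right, real_inner_self_eq_norm_sq]
    rw [hip] at key
    have hnsq : ‖-(η • g)‖ ^ 2 ≤ ((1 + γ) * B / μ) ^ 2 * ‖g‖ ^ 2 := by
      have h1 : ‖-(η • g)‖ ≤ ((1 + γ) * B / μ) * ‖g‖ := by
        rw [← hdiffpt]; exact hdist
      nlinarith [norm_nonneg (-(η • g))]
    have hμ2 : (0:ℝ) < μ ^ 2 := by positivity
    have hfinal : L₂ / 2 * ‖-(η • g)‖ ^ 2 ≤ L₂ * B ^ 2 * (1 + γ) ^ 2 / (2 * μ ^ 2) * ‖g‖ ^ 2 := by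
      have : L₂ / 2 * ‖-(η • g)‖ ^ 2 ≤ L₂ / 2 * (((1 + γ) * B / μ) ^ 2 * ‖g‖ ^ 2) := by
        apply mul_le_mul_of_nonneg_left hnsq (by linarith)
      calc L₂ / 2 * ‖-(η • g)‖ ^ 2 ≤ L₂ / 2 * (((1 + γ) * B / μ) ^ 2 * ‖g‖ ^ 2) := this
        _ = L₂ * B ^ 2 * (1 + γ) ^ 2 / (2 * μ ^ 2) * ‖g‖ ^ 2 := by
            field_simp
    linarith
end

section
/- Let E be a real inner product space, let N ≥ 1 and K ≥ 1 be natural numbers, let μ > 0, γ ≥ 0, B ≥ 0, G ≥ 0 be reals, let w : Fin N → E, w₀ ∈ E, and g : Fin N → ℝ with g_k ≥ 0. Assume ‖w_k − w₀‖ ≤ ((1 + γ)/μ)·g_k for every k and (1/N)·Σ_k g_k² ≤ B²·G². Let w̄ = (1/N)·Σ_k w_k. Then (1/N^K) · Σ_{s : Fin K → Fin N} ‖(1/K)·Σ_{j : Fin K} w_{s(j)} − w̄‖² ≤ (2/K)·((1 + γ)²·B²/μ²)·G². (This is the bounded-variance estimate, Eq. (34), in the proof of Theorem 4.3, with g_k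 playing the role of ‖∇f_k(w₀)‖ and G that of ‖∇f(w₀)‖.) -/
open Finset RealInnerProductSpace

lemma sum_eval_aux {ι α : Type*} [Fintype ι] [DecidableEq ι] [Fintype α] (j : ι) (f : α → ℝ) :
    ∑ s : ι → α, f (s j) = (Fintype.card ({ i // i ≠ j } → α) : ℝ) * ∑ a, f a := by
  rw [Fintype.sum_equiv (Equiv.funSplitAt j α) _ (fun p => f p.1) (by intro s; simp)]
  rw [Fintype.sum_prod_type]
  simp [Finset.sum_const, mul_comm, Finset.sum_mul]

lemma sum_eval_pair_aux {ι α : Type*} [Fintype ι] [DecidableEq ι] [Fintype α] {j j' : ι}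
    (h : j' ≠ j) (F : α → α → ℝ) :
    ∃ c : ℝ, ∑ s : ι → α, F (s j) (s j') = c * ∑ a, ∑ b, F a b := by
  refine ⟨(Fintype.card ({ i : { i // i ≠ j } // i ≠ ⟨j', h⟩ } → α) : ℝ), ?_⟩
  rw [Fintype.sum_equiv (Equiv.funSplitAt j α) _ (fun p => F p.1 (p.2 ⟨j', h⟩))
    (by intro s; simp)]
  rw [Fintype.sum_prod_type]
  rw [Finset.mul_sum]
  refine Finset.sum_congr rfl fun a _ => ?_
  exact sum_eval_aux (⟨j', h⟩ : {i // i ≠ j}) (fun b => F a b)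

/-- Bounded-variance estimate, Eq. (34) in the proof of Theorem 4.3: the second moment
of the deviation of the sampled mean from the full mean is at most
`(2/K)((1+γ)²B²/μ²)G²`, where the average is over all `N^K` sampling outcomes. -/
theorem sampled_mean_variance_bound {E : Type*} [NormedAddCommGroup E]
    [InnerProductSpace ℝ E] {N K : ℕ} (hN : 1 ≤ N) (hK : 1 ≤ K)
    (μ γ B G : ℝ) (hμ : 0 < μ) (hγ : 0 ≤ γ) (hB : 0 ≤ B) (hG : 0 ≤ G)
    (w : Fin N → E) (w₀ : E) (g : Fin N → ℝ) (hg : ∀ k, 0 ≤ g k)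
    (hdist : ∀ k, ‖w k - w₀‖ ≤ ((1 + γ) / μ) * g k)
    (hdissim : (N : ℝ)⁻¹ * ∑ k, (g k) ^ 2 ≤ B ^ 2 * G ^ 2)
    (wbar : E) (hwbar : wbar = (N : ℝ)⁻¹ • ∑ k, w k) :
    ((N : ℝ) ^ K)⁻¹ * ∑ s : Fin K → Fin N, ‖(K : ℝ)⁻¹ • ∑ j, w (s j) - wbar‖ ^ 2 ≤
      (2 / (K : ℝ)) * ((1 + γ) ^ 2 * B ^ 2 / μ ^ 2) * G ^ 2 := by
  have hNpos : (0:ℝ) < N := by exact_mod_cast Nat.lt_of_lt_of_le Nat.zero_lt_one hN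
  have hKpos : (0:ℝ) < K := by exact_mod_cast Nat.lt_of_lt_of_le Nat.zero_lt_one hK
  have hN0 : (N : ℝ) ≠ 0 := ne_of_gt hNpos
  have hK0 : (K : ℝ) ≠ 0 := ne_of_gt hKpos
  set u : Fin N → E := fun k => w k - wbar with hu
  have husum : ∑ k, u k = 0 := by
    simp only [hu, Finset.sum_sub_distrib, Finset.sum_const, Finset.card_univ,
      Fintype.card_fin, hwbar, smul_smul, ← Nat.cast_smul_eq_nsmul ℝ]
    rw [mul_inv_cancel₀ hN0, one_smul, sub_self]
  have hrw : ∀ s : Fin K → Fin N,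
      (K : ℝ)⁻¹ • ∑ j, w (s j) - wbar = (K : ℝ)⁻¹ • ∑ j, u (s j) := by
    intro s
    simp only [hu, Finset.sum_sub_distrib, smul_sub, Finset.sum_const, Finset.card_univ,
      Fintype.card_fin, ← Nat.cast_smul_eq_nsmul ℝ, smul_smul, inv_mul_cancel₀ hK0, one_smul]
  have hz : (∑ a, ∑ b, ⟪u a, u b⟫) = 0 := by
    simp only [← inner_sum, husum, inner_zero_right, Finset.sum_const_zero]
  -- key combinatorial identity
  have key : ∑ s : Fin K → Fin N, ‖∑ j, u (s j)‖ ^ 2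
      = (K : ℝ) * (N : ℝ) ^ (K - 1) * ∑ a, ‖u a‖ ^ 2 := by
    have expand : ∀ s : Fin K → Fin N,
        ‖∑ j, u (s j)‖ ^ 2 = ∑ j, ∑ j', ⟪u (s j), u (s j')⟫ := by
      intro s
      rw [← real_inner_self_eq_norm_sq, sum_inner]
      exact Finset.sum_congr rfl fun j _ => by rw [inner_sum]
    simp only [expand]
    rw [Finset.sum_comm]
    have hdiag : ∀ j : Fin K,
        (∑ j' : Fin K, ∑ s : Fin K → Fin N, ⟪u (s j), u (s j')⟫)
          = (N : ℝ) ^ (K - 1) * ∑ a, ‖u a‖ ^ 2 := by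
      intro j
      rw [Finset.sum_eq_single j]
      · have := sum_eval_aux (α := Fin N) j (fun a => ‖u a‖ ^ 2)
        have hc : (Fintype.card ({ i : Fin K // i ≠ j } → Fin N) : ℝ) = (N : ℝ) ^ (K - 1) := by
          rw [Fintype.card_fun]
          have : Fintype.card { i : Fin K // i ≠ j } = K - 1 := by
            simp [Fintype.card_subtype_compl, Fintype.card_subtype_eq]
          rw [this, Fintype.card_fin]
          push_cast
          ring
        rw [← hc, ← this]
        exact Finset.sum_congr rfl fun s _ => by rw [real_inner_self_eq_norm_sq]
      · intro j' _ hj'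
        obtain ⟨c, hc⟩ := sum_eval_pair_aux (α := Fin N) hj' (fun a b => ⟪u a, u b⟫)
        -- careful: we need ∑ s, ⟪u (s j), u (s j')⟫, pair lemma with roles
        rw [hc, hz, mul_zero]
      · intro h; exact absurd (Finset.mem_univ j) h
    calc (∑ j : Fin K, ∑ s : Fin K → Fin N, ∑ j' : Fin K, ⟪u (s j), u (s j')⟫)
        = ∑ j : Fin K, ∑ j' : Fin K, ∑ s : Fin K → Fin N, ⟪u (s j), u (s j')⟫ :=
          Finset.sum_congr rfl fun j _ => Finset.sum_comm
      _ = ∑ _j : Fin K, (N : ℝ) ^ (K - 1) * ∑ a, ‖u a‖ ^ 2 :=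
          Finset.sum_congr rfl fun j _ => hdiag j
      _ = (K : ℝ) * (N : ℝ) ^ (K - 1) * ∑ a, ‖u a‖ ^ 2 := by
          rw [Finset.sum_const, Finset.card_univ, Fintype.card_fin, nsmul_eq_mul]; ring
  -- rewrite LHS
  have hNK : (N : ℝ) ^ K = (N : ℝ) ^ (K - 1) * N := by
    conv_lhs => rw [← Nat.sub_add_cancel hK]
    rw [pow_succ]
  have hLHS : ((N : ℝ) ^ K)⁻¹ * ∑ s : Fin K → Fin N, ‖(K : ℝ)⁻¹ • ∑ j, w (s j) - wbar‖ ^ 2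
      = (K : ℝ)⁻¹ * ((N : ℝ)⁻¹ * ∑ a, ‖u a‖ ^ 2) := by
    have : ∀ s : Fin K → Fin N, ‖(K : ℝ)⁻¹ • ∑ j, w (s j) - wbar‖ ^ 2
        = ((K : ℝ)⁻¹) ^ 2 * ‖∑ j, u (s j)‖ ^ 2 := by
      intro s
      rw [hrw s, norm_smul, mul_pow]
      congr 1
      rw [Real.norm_eq_abs, abs_of_nonneg (by positivity)]
    simp only [this]
    rw [← Finset.mul_sum, key, hNK]
    field_simp
  rw [hLHS]
  -- analytic bounds
  have h1 : ∑ a, ‖u a‖ ^ 2 ≤ ∑ a, ‖w a - w₀‖ ^ 2 := by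
    have hdecomp : ∀ a : Fin N,
        ‖w a - w₀‖ ^ 2 = ‖u a‖ ^ 2 + 2 * (⟪u a, wbar - w₀⟫) + ‖wbar - w₀‖ ^ 2 := by
      intro a
      rw [← norm_add_sq_real]
      congr 1
      simp only [hu]
      abel
    have e : ∑ a, ‖w a - w₀‖ ^ 2
        = (∑ a, ‖u a‖ ^ 2) + (N : ℝ) * ‖wbar - w₀‖ ^ 2 := by
      simp only [hdecomp, Finset.sum_add_distrib, Finset.sum_const, Finset.card_univ,
        Fintype.card_fin, nsmul_eq_mul]
      rw [← Finset.mul_sum, ← sum_inner, husum, inner_zero_left, mul_zero, add_zero]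
    have : 0 ≤ (N : ℝ) * ‖wbar - w₀‖ ^ 2 := by positivity
    linarith
  have h2 : ∑ a, ‖w a - w₀‖ ^ 2 ≤ ((1 + γ) / μ) ^ 2 * ∑ a, g a ^ 2 := by
    rw [Finset.mul_sum]
    refine Finset.sum_le_sum fun a _ => ?_
    have := pow_le_pow_left₀ (norm_nonneg (w a - w₀)) (hdist a) 2
    rwa [mul_pow] at this
  have h3 : (N : ℝ)⁻¹ * ∑ a, ‖u a‖ ^ 2 ≤ ((1 + γ) / μ) ^ 2 * (B ^ 2 * G ^ 2) := by
    calc (N : ℝ)⁻¹ * ∑ a, ‖u a‖ ^ 2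
        ≤ (N : ℝ)⁻¹ * (((1 + γ) / μ) ^ 2 * ∑ a, g a ^ 2) := by
          apply mul_le_mul_of_nonneg_left (le_trans h1 h2) (by positivity)
      _ = ((1 + γ) / μ) ^ 2 * ((N : ℝ)⁻¹ * ∑ a, g a ^ 2) := by ring
      _ ≤ ((1 + γ) / μ) ^ 2 * (B ^ 2 * G ^ 2) := by
          apply mul_le_mul_of_nonneg_left hdissim (by positivity)
  calc (K : ℝ)⁻¹ * ((N : ℝ)⁻¹ * ∑ a, ‖u a‖ ^ 2)
      ≤ (K : ℝ)⁻¹ * (((1 + γ) / μ) ^ 2 * (B ^ 2 * G ^ 2)) :=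
        mul_le_mul_of_nonneg_left h3 (by positivity)
    _ ≤ (2 / (K : ℝ)) * ((1 + γ) ^ 2 * B ^ 2 / μ ^ 2) * G ^ 2 := by
        rw [div_eq_mul_inv 2]
        have hX : ((1 + γ) / μ) ^ 2 * (B ^ 2 * G ^ 2)
            = (1 + γ) ^ 2 * B ^ 2 / μ ^ 2 * G ^ 2 := by
          field_simp
        rw [hX]
        have hXnn : 0 ≤ (1 + γ) ^ 2 * B ^ 2 / μ ^ 2 * G ^ 2 := by positivity
        have hKinv : (0:ℝ) ≤ (K : ℝ)⁻¹ := by positivity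
        nlinarith
end

section
/- Let E = EuclideanSpace ℝ (Fin d) and let f : E → ℝ be differentiable with ⟪∇f(v) − ∇f(w), v − w⟫ ≥ μ‖v − w‖² for all v, w, where μ > 0. Suppose w* ∈ E satisfies ∇f(w*) = 0. Let m > 0 and e ≥ 0 be reals with 2μm ≤ 1, and let (w_t)_{t ∈ ℕ} be a sequence in E satisfying f(w_{t+1}) ≤ f(w_t) − m·‖∇f(w_t)‖² + e for every t. Then for every T ∈ ℕ: f(w_T) − f(w*) ≤ (1 − 2μm)^T · (f(w_0) − f(w*)) + e·(1 − (1 − 2μm)^T)/(2μm); in particular f(w_T) − f(w*) ≤ (1 − 2μm)^T·(f(w_0) − f(w*)) + e/(2μm). (This is the deterministic convergence core of the utility guarantee Theorem 4.3, combining Eqs. (45)–(54): FedCEO's iterates converge linearly to within e/(2μm) of the optimum.) -/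
open scoped RealInnerProductSpace

lemma fedceo_strong_lb {d : ℕ} (μ : ℝ)
    (f : EuclideanSpace ℝ (Fin d) → ℝ) (hf : Differentiable ℝ f)
    (hconv : ∀ v w : EuclideanSpace ℝ (Fin d),
      μ * ‖v - w‖ ^ 2 ≤ ⟪gradient f v - gradient f w, v - w⟫)
    (x y : EuclideanSpace ℝ (Fin d)) :
    f x + ⟪gradient f x, y - x⟫ + μ / 2 * ‖y - x‖ ^ 2 ≤ f y := by
  have hfd : ∀ p v, fderiv ℝ f p v = ⟪gradient f p, v⟫ := by
    intro p v
    rw [gradient, InnerProductSpace.toDual_symm_apply]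
  set φ : ℝ → ℝ := fun t =>
    f (x + t • (y - x)) - t * ⟪gradient f x, y - x⟫ - μ * t ^ 2 / 2 * ‖y - x‖ ^ 2 with hφ
  have hc : ∀ t : ℝ, HasDerivAt (fun t : ℝ => x + t • (y - x)) (y - x) t := by
    intro t
    simpa using ((hasDerivAt_id t).smul_const (y - x)).const_add x
  have hd : ∀ t : ℝ, HasDerivAt φ
      (⟪gradient f (x + t • (y - x)), y - x⟫ - ⟪gradient f x, y - x⟫
        - μ * t * ‖y - x‖ ^ 2) t := by
    intro t
    have h1 : HasDerivAt (fun t : ℝ => f (x + t • (y - x)))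
        (⟪gradient f (x + t • (y - x)), y - x⟫) t := by
      have := ((hf _).hasFDerivAt).comp_hasDerivAt t (hc t)
      rwa [hfd] at this
    have h2 : HasDerivAt (fun t : ℝ => t * ⟪gradient f x, y - x⟫)
        (⟪gradient f x, y - x⟫) t := by
      simpa using (hasDerivAt_id t).mul_const _
    have h3 : HasDerivAt (fun t : ℝ => μ * t ^ 2 / 2 * ‖y - x‖ ^ 2)
        (μ * t * ‖y - x‖ ^ 2) t := by
      have : HasDerivAt (fun t : ℝ => μ * t ^ 2 / 2 * ‖y - x‖ ^ 2)
          (μ * (2 * t ^ 1) / 2 * ‖y - x‖ ^ 2) t := by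
        exact (((hasDerivAt_pow 2 t).const_mul μ).div_const 2).mul_const _
      convert this using 1; ring
    exact (h1.sub h2).sub h3
  have hmono : φ 0 ≤ φ 1 := by
    have : MonotoneOn φ (Set.Icc 0 1) := by
      apply monotoneOn_of_deriv_nonneg (convex_Icc 0 1)
      · exact Continuous.continuousOn (continuous_iff_continuousAt.2 fun t => (hd t).continuousAt)
      · intro t _
        exact ((hd t).differentiableAt).differentiableWithinAt
      · intro t ht
        rw [(hd t).deriv]
        rw [interior_Icc] at ht
        have ht0 : (0:ℝ) < t := ht.1
        have key := hconv (x + t • (y - x)) x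
        have hsub : x + t • (y - x) - x = t • (y - x) := by abel
        rw [hsub, real_inner_smul_right, norm_smul] at key
        simp only [Real.norm_eq_abs, abs_of_pos ht0] at key
        have key2 : μ * t * ‖y - x‖ ^ 2 ≤
            ⟪gradient f (x + t • (y - x)) - gradient f x, y - x⟫ := by
          rw [mul_pow] at key
          nlinarith
        rw [inner_sub_left] at key2
        linarith
    exact this (by norm_num) (by norm_num) (by norm_num)
  have h0 : φ 0 = f x := by simp [hφ]
  have h1 : φ 1 = f y - ⟪gradient f x, y - x⟫ - μ / 2 * ‖y - x‖ ^ 2 := by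
    have hxy : x + (y - x) = y := by abel
    simp only [hφ, one_smul, one_pow, one_mul, hxy]
    ring
  rw [h0, h1] at hmono
  linarith

lemma fedceo_pl {d : ℕ} (μ : ℝ) (hμ : 0 < μ)
    (f : EuclideanSpace ℝ (Fin d) → ℝ) (hf : Differentiable ℝ f)
    (hconv : ∀ v w : EuclideanSpace ℝ (Fin d),
      μ * ‖v - w‖ ^ 2 ≤ ⟪gradient f v - gradient f w, v - w⟫)
    (wstar : EuclideanSpace ℝ (Fin d))
    (x : EuclideanSpace ℝ (Fin d)) :
    2 * μ * (f x - f wstar) ≤ ‖gradient f x‖ ^ 2 := by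
  have hlb := fedceo_strong_lb μ f hf hconv x wstar
  have hcs : -⟪gradient f x, wstar - x⟫ ≤ ‖gradient f x‖ * ‖wstar - x‖ := by
    have := real_inner_le_norm (gradient f x) (x - wstar)
    have h1 : (x : EuclideanSpace ℝ (Fin d)) - wstar = -(wstar - x) := by abel
    rw [h1, inner_neg_right, norm_neg] at this
    linarith
  nlinarith [sq_nonneg (‖gradient f x‖ - μ * ‖wstar - x‖), sq_nonneg ‖wstar - x‖]

/-- Deterministic convergence core of the utility guarantee, Theorem 4.3
(Eqs. (45)–(54)): a sequence satisfying the per-round descent inequality with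
additive error `e` converges linearly to within `e/(2μm)` of the optimum of a
μ-strongly convex objective. -/
theorem fedceo_linear_convergence {d : ℕ} (μ m e : ℝ) (hμ : 0 < μ)
    (hm : 0 < m) (he : 0 ≤ e) (hcontr : 2 * μ * m ≤ 1)
    (f : EuclideanSpace ℝ (Fin d) → ℝ) (hf : Differentiable ℝ f)
    (hconv : ∀ v w : EuclideanSpace ℝ (Fin d),
      μ * ‖v - w‖ ^ 2 ≤ ⟪gradient f v - gradient f w, v - w⟫)
    (wstar : EuclideanSpace ℝ (Fin d)) (hwstar : gradient f wstar = 0)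
    (w : ℕ → EuclideanSpace ℝ (Fin d))
    (hdesc : ∀ t, f (w (t + 1)) ≤ f (w t) - m * ‖gradient f (w t)‖ ^ 2 + e) :
    ∀ T : ℕ,
      f (w T) - f wstar ≤
        (1 - 2 * μ * m) ^ T * (f (w 0) - f wstar) +
          e * (1 - (1 - 2 * μ * m) ^ T) / (2 * μ * m) ∧
      f (w T) - f wstar ≤
        (1 - 2 * μ * m) ^ T * (f (w 0) - f wstar) + e / (2 * μ * m) := by
  set α : ℝ := 2 * μ * m with hα
  have hα0 : 0 < α := by positivity
  have h1α : 0 ≤ 1 - α := by linarith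
  have hstep : ∀ t, f (w (t + 1)) - f wstar ≤ (1 - α) * (f (w t) - f wstar) + e := by
    intro t
    have hpl := fedceo_pl μ hμ f hf hconv wstar (w t)
    have hd := hdesc t
    nlinarith
  have main : ∀ T : ℕ, f (w T) - f wstar ≤
      (1 - α) ^ T * (f (w 0) - f wstar) + e * (1 - (1 - α) ^ T) / α := by
    intro T
    induction T with
    | zero => simp
    | succ T ih =>
      calc f (w (T + 1)) - f wstar ≤ (1 - α) * (f (w T) - f wstar) + e := hstep T
        _ ≤ (1 - α) * ((1 - α) ^ T * (f (w 0) - f wstar) + e * (1 - (1 - α) ^ T) / α) + e :=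
            by nlinarith [mul_le_mul_of_nonneg_left ih h1α]
        _ = (1 - α) ^ (T + 1) * (f (w 0) - f wstar) + e * (1 - (1 - α) ^ (T + 1)) / α := by
            field_simp
            ring
  intro T
  refine ⟨main T, (main T).trans ?_⟩
  have hp : 0 ≤ (1 - α) ^ T := pow_nonneg h1α T
  have : e * (1 - (1 - α) ^ T) / α ≤ e / α := by
    apply div_le_div_of_nonneg_right ?_ hα0.le
    nlinarith
  linarith
end
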